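/- Let G = (U, V, E) be a bipartite stochastic graph with edge probabilities p_e, weights w_e ≥ 0, and downward-closed probing constraints C_v. Given any feasible solution (x_v(e))_{v∈V, e∈C_v} to LP-config — i.e., x_v(e) ≥ 0, Σ_{e∈C_v} x_v(e) = 1 for all v, and Σ_{v∈V} Σ_{e∈C_v : (u,v)∈e} p_{u,v} g(e_{<(u,v)}) x_v(e) ≤ 1 for all u ∈ U — the algorithm that independently runs VertexProbe on each v ∈ V and collects the returned edges produces a (random) edge set N such that: (i) each v ∈ V is incident to at most one edge of N; (ii) for each u ∈ U, the expected number of edges of N incident to u is at most 1; and (iii) E[w(N)] = Σ_{v∈V} Σ_{e∈C_v} val(e) · x_v(e). -/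

import Mathlib

open scoped Classical

/-- `val(e) = Σ_{i<|e|} g(e_{<i}) · p_{e_i} w_{e_i}` where `g(e_{<i}) = ∏_{j<i}(1-p_{e_j})`. -/
noncomputable def tupleVal {U : Type} (p w : U → ℝ) (l : List U) : ℝ :=
  ∑ i ∈ Finset.range l.length,
    ((l.take i).map fun u => 1 - p u).prod * ((l.map fun u => p u * w u).getD i 0)

section Aux

variable {ι : Type} [Fintype ι] [DecidableEq ι]

lemma sum_pi_prod_eq_one {T : ι → Type} [∀ i, Fintype (T i)]
    (A : ∀ i, T i → ℝ) (h1 : ∀ i, ∑ c, A i c = 1) :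
    ∑ f : ∀ i, T i, ∏ i, A i (f i) = 1 := by
  have h := Finset.prod_univ_sum (fun i => (Finset.univ : Finset (T i))) A
  rw [Fintype.piFinset_univ] at h
  rw [← h]
  simp [h1]

lemma sum_pi_factor {T : ι → Type} [∀ i, Fintype (T i)]
    (A : ∀ i, T i → ℝ) (i₀ : ι) (h1 : ∑ c, A i₀ c = 1)
    (g : T i₀ → ℝ) (H : (∀ i, T i) → ℝ)
    (hH : ∀ f f' : ∀ i, T i, (∀ i, i ≠ i₀ → f i = f' i) → H f = H f') :
    ∑ f : ∀ i, T i, (∏ i, A i (f i)) * (g (f i₀) * H f)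
      = (∑ c, A i₀ c * g c) * ∑ f : ∀ i, T i, (∏ i, A i (f i)) * H f := by
  classical
  set e := Equiv.piSplitAt i₀ T with he
  have hsymm_same : ∀ (c : T i₀) (t : ∀ j : { j // j ≠ i₀ }, T j), e.symm (c, t) i₀ = c := by
    intro c t
    simp [he, Equiv.piSplitAt_symm_apply]
  have hsymm_ne : ∀ (c : T i₀) (t : ∀ j : { j // j ≠ i₀ }, T j) (j : ι) (hj : j ≠ i₀),
      e.symm (c, t) j = t ⟨j, hj⟩ := by
    intro c t j hj
    simp [he, Equiv.piSplitAt_symm_apply, hj]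
  have key : ∀ (G : (∀ i, T i) → ℝ),
      ∑ f : ∀ i, T i, (∏ i, A i (f i)) * G f
        = ∑ c : T i₀, A i₀ c * ∑ t : ∀ j : { j // j ≠ i₀ }, T j,
            (∏ j : { j // j ≠ i₀ }, A j.1 (t j)) * G (e.symm (c, t)) := by
    intro G
    rw [← Equiv.sum_comp e.symm (fun f => (∏ i, A i (f i)) * G f), Fintype.sum_prod_type]
    refine Finset.sum_congr rfl fun c _ => ?_
    rw [Finset.mul_sum]
    refine Finset.sum_congr rfl fun t _ => ?_
    have hprod : (∏ i, A i (e.symm (c, t) i))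
        = A i₀ c * ∏ j : { j // j ≠ i₀ }, A j.1 (t j) := by
      rw [← Finset.mul_prod_erase Finset.univ (fun i => A i (e.symm (c, t) i))
            (Finset.mem_univ i₀), hsymm_same]
      congr 1
      rw [Finset.prod_subtype (p := fun j => j ≠ i₀) (Finset.univ.erase i₀)
            (fun j => by simp [Finset.mem_erase]) (fun j => A j (e.symm (c, t) j))]
      exact Finset.prod_congr rfl fun j _ => by rw [hsymm_ne c t j.1 j.2]
    rw [hprod]
    ring
  have hinner : ∀ (c c' : T i₀),
      (∑ t : ∀ j : { j // j ≠ i₀ }, T j,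
          (∏ j : { j // j ≠ i₀ }, A j.1 (t j)) * H (e.symm (c, t)))
        = ∑ t : ∀ j : { j // j ≠ i₀ }, T j,
            (∏ j : { j // j ≠ i₀ }, A j.1 (t j)) * H (e.symm (c', t)) := by
    intro c c'
    refine Finset.sum_congr rfl fun t _ => ?_
    congr 1
    refine hH _ _ fun j hj => ?_
    rw [hsymm_ne c t j hj, hsymm_ne c' t j hj]
  rw [key (fun f => g (f i₀) * H f), key H]
  set I : T i₀ → ℝ := fun c => ∑ t : ∀ j : { j // j ≠ i₀ }, T j,
      (∏ j : { j // j ≠ i₀ }, A j.1 (t j)) * H (e.symm (c, t)) with hI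
  have hIc : ∀ c : T i₀, I c = ∑ c', A i₀ c' * I c' := by
    intro c
    have : ∀ c', A i₀ c' * I c' = A i₀ c' * I c := by
      intro c'; rw [hI]; simp only []; rw [hinner c' c]
    rw [Finset.sum_congr rfl (fun c' _ => this c'), ← Finset.sum_mul, h1, one_mul]
  calc ∑ c, A i₀ c * ∑ t : ∀ j : { j // j ≠ i₀ }, T j,
          (∏ j : { j // j ≠ i₀ }, A j.1 (t j)) * (g ((e.symm (c, t)) i₀) * H (e.symm (c, t)))
      = ∑ c, A i₀ c * g c * I c := by
        refine Finset.sum_congr rfl fun c _ => ?_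
        have hstep : (∑ t : ∀ j : { j // j ≠ i₀ }, T j,
            (∏ j : { j // j ≠ i₀ }, A j.1 (t j)) * (g ((e.symm (c, t)) i₀) * H (e.symm (c, t))))
            = g c * I c := by
          rw [hI, Finset.mul_sum]
          refine Finset.sum_congr rfl fun t _ => ?_
          rw [hsymm_same]
          ring
        rw [hstep]
        ring
    _ = ∑ c, A i₀ c * g c * ∑ c', A i₀ c' * I c' := by
        exact Finset.sum_congr rfl fun c _ => by rw [hIc c]
    _ = (∑ c, A i₀ c * g c) * ∑ c', A i₀ c' * I c' := by rw [Finset.sum_mul]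

lemma sum_pi_marginal {T : ι → Type} [∀ i, Fintype (T i)]
    (A : ∀ i, T i → ℝ) (h1 : ∀ i, ∑ c, A i c = 1) (i₀ : ι) (g : T i₀ → ℝ) :
    ∑ f : ∀ i, T i, (∏ i, A i (f i)) * g (f i₀) = ∑ c, A i₀ c * g c := by
  have h := sum_pi_factor A i₀ (h1 i₀) g (fun _ => 1) (fun _ _ _ => rfl)
  simpa [sum_pi_prod_eq_one A h1] using h

lemma sum_pi_pushforward {T S : ι → Type} [∀ i, Fintype (T i)] [∀ i, Fintype (S i)]
    [∀ i, DecidableEq (S i)]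
    (A : ∀ i, T i → ℝ) (φ : ∀ i, T i → S i) (g : (∀ i, S i) → ℝ) :
    ∑ f : ∀ i, T i, (∏ i, A i (f i)) * g (fun i => φ i (f i))
      = ∑ s : ∀ i, S i, (∏ i, ∑ t ∈ Finset.univ.filter fun t => φ i t = s i, A i t) * g s := by
  classical
  rw [← Finset.sum_fiberwise Finset.univ (fun f : ∀ i, T i => fun i => φ i (f i))
        (fun f => (∏ i, A i (f i)) * g (fun i => φ i (f i)))]
  refine Finset.sum_congr rfl fun s _ => ?_
  have hfil : (Finset.univ.filter fun f : ∀ i, T i => (fun i => φ i (f i)) = s)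
      = Fintype.piFinset (fun i => Finset.univ.filter fun t => φ i t = s i) := by
    ext f
    simp [Fintype.mem_piFinset, funext_iff]
  calc ∑ f ∈ Finset.univ.filter fun f : ∀ i, T i => (fun i => φ i (f i)) = s,
          (∏ i, A i (f i)) * g (fun i => φ i (f i))
      = ∑ f ∈ Finset.univ.filter fun f : ∀ i, T i => (fun i => φ i (f i)) = s,
          (∏ i, A i (f i)) * g s := by
        refine Finset.sum_congr rfl fun f hf => ?_
        rw [(Finset.mem_filter.mp hf).2]
    _ = (∑ f ∈ Finset.univ.filter fun f : ∀ i, T i => (fun i => φ i (f i)) = s,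
          ∏ i, A i (f i)) * g s := by rw [Finset.sum_mul]
    _ = (∏ i, ∑ t ∈ Finset.univ.filter fun t => φ i t = s i, A i t) * g s := by
        rw [hfil, ← Finset.prod_univ_sum]

end Aux



section Aux2

lemma find?_congr' {α : Type} (p q : α → Bool) :
    ∀ l : List α, (∀ a ∈ l, p a = q a) → l.find? p = l.find? q := by
  intro l
  induction l with
  | nil => intro _; rfl
  | cons a l ih =>
    intro h
    rw [List.find?_cons, List.find?_cons, h a List.mem_cons_self,
      ih fun b hb => h b (List.mem_cons_of_mem a hb)]

noncomputable def findExp {U : Type} (q : U → ℝ) (F : Option U → ℝ) : List U → ℝ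
  | [] => F none
  | u :: l => q u * F (some u) + (1 - q u) * findExp q F l

lemma sum_bernoulli_one {U : Type} [Fintype U] [DecidableEq U] (q : U → ℝ) :
    ∑ s : U → Bool, (∏ u, if s u then q u else 1 - q u) = 1 :=
  sum_pi_prod_eq_one (fun u (c : Bool) => if c then q u else 1 - q u)
    (fun u => by rw [Fintype.sum_bool]; simp)

lemma sum_find {U : Type} [Fintype U] [DecidableEq U] (q : U → ℝ) (F : Option U → ℝ) :
    ∀ l : List U, l.Nodup →
      (∑ s : U → Bool, (∏ u, if s u then q u else 1 - q u) * F (l.find? fun u => s u))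
        = findExp q F l := by
  intro l
  induction l with
  | nil =>
    intro _
    simp only [List.find?_nil, findExp]
    rw [← Finset.sum_mul, sum_bernoulli_one, one_mul]
  | cons a l ih =>
    intro hnd
    have ha : a ∉ l := (List.nodup_cons.mp hnd).1
    have hl : l.Nodup := (List.nodup_cons.mp hnd).2
    have hsplit : ∀ s : U → Bool,
        (∏ u, if s u then q u else 1 - q u) * F ((a :: l).find? fun u => s u)
          = (∏ u, if s u then q u else 1 - q u) *
              ((if s a then F (some a) else 0) * (1 : ℝ))
            + (∏ u, if s u then q u else 1 - q u) *
              ((if s a then (0:ℝ) else 1) * F (l.find? fun u => s u)) := by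
      intro s
      rw [List.find?_cons]
      cases hsa : s a <;> simp [hsa]
    rw [Finset.sum_congr rfl fun s _ => hsplit s, Finset.sum_add_distrib]
    have h1 := sum_pi_factor (ι := U) (T := fun _ => Bool)
      (fun u (c : Bool) => if c then q u else 1 - q u) a
      (by rw [Fintype.sum_bool]; norm_num)
      (fun c => if c then F (some a) else 0) (fun _ => 1) (fun _ _ _ => rfl)
    have h2 := sum_pi_factor (ι := U) (T := fun _ => Bool)
      (fun u (c : Bool) => if c then q u else 1 - q u) a
      (by rw [Fintype.sum_bool]; norm_num)
      (fun c => if c then (0:ℝ) else 1)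
      (fun s => F (l.find? fun u => s u))
      (by
        intro f f' hff
        exact congrArg F (find?_congr' _ _ l fun b hb => hff b (fun hba => ha (hba ▸ hb))))
    rw [h1, h2]
    rw [ih hl]
    simp only [mul_one]
    rw [sum_bernoulli_one, Fintype.sum_bool, Fintype.sum_bool]
    simp [findExp]

lemma findExp_elim {U : Type} (q c : U → ℝ) :
    ∀ l : List U, findExp q (fun o => o.elim 0 c) l = tupleVal q c l := by
  intro l
  induction l with
  | nil => simp [findExp, tupleVal]
  | cons a l ih =>
    rw [findExp, ih, tupleVal, tupleVal]
    rw [List.length_cons, Finset.sum_range_succ']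
    simp only [List.take_succ_cons, List.map_cons, List.prod_cons, List.take_zero,
      List.map_nil, List.prod_nil, List.getD_cons_succ, List.getD_cons_zero, one_mul]
    simp only [mul_assoc]
    rw [← Finset.mul_sum]
    have helim : (some a).elim (0:ℝ) c = c a := rfl
    rw [helim]
    ring

lemma findExp_indicator {U : Type} [DecidableEq U] (q : U → ℝ) (u : U) :
    ∀ l : List U, l.Nodup →
      findExp q (fun o => if o = some u then (1:ℝ) else 0) l
        = if u ∈ l then
            q u * ((l.takeWhile fun u' => u' ≠ u).map fun u' => 1 - q u').prod
          else 0 := by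
  intro l
  induction l with
  | nil => intro _; simp [findExp]
  | cons a l ih =>
    intro hnd
    have ha : a ∉ l := (List.nodup_cons.mp hnd).1
    have hl : l.Nodup := (List.nodup_cons.mp hnd).2
    rw [findExp, ih hl]
    by_cases hau : a = u
    · subst hau
      have hnotmem : a ∉ l := ha
      rw [List.takeWhile_cons]
      simp [hnotmem]
    · have htw : (a :: l).takeWhile (fun u' => u' ≠ u) = a :: l.takeWhile fun u' => u' ≠ u := by
        rw [List.takeWhile_cons]
        simp [hau]
      have hmem : (u ∈ a :: l) ↔ u ∈ l := by
        constructor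
        · intro h
          rcases List.mem_cons.mp h with h | h
          · exact absurd h.symm hau
          · exact h
        · exact fun h => List.mem_cons_of_mem a h
      rw [htw]
      simp only [List.map_cons, List.prod_cons]
      by_cases hul : u ∈ l
      · rw [if_pos (hmem.mpr hul), if_pos hul]
        have : (some a = some u) = False := by simp [hau]
        simp [this]
        ring
      · rw [if_neg (fun h => hul (hmem.mp h)), if_neg hul]
        simp [hau]

end Aux2
section Aux3

lemma sum_edge_marginal {U V : Type} [Fintype U] [Fintype V] [DecidableEq U] [DecidableEq V]
    (W : U → V → Bool → ℝ) (hW : ∀ u v, ∑ c, W u v c = 1)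
    (v₀ : V) (g : (U → Bool) → ℝ) :
    ∑ b : U → V → Bool, (∏ u, ∏ v, W u v (b u v)) * g (fun u => b u v₀)
      = ∑ s : U → Bool, (∏ u, W u v₀ (s u)) * g s := by
  have h := sum_pi_pushforward (ι := U) (T := fun _ => V → Bool) (S := fun _ => Bool)
      (fun u t => ∏ v, W u v (t v)) (fun _ t => t v₀) g
  rw [h]
  refine Finset.sum_congr rfl fun s _ => ?_
  congr 1
  refine Finset.prod_congr rfl fun u _ => ?_
  have hmarg := sum_pi_marginal (ι := V) (T := fun _ => Bool) (fun v c => W u v c)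
      (fun v => hW u v) v₀ (fun c => if c = s u then (1:ℝ) else 0)
  calc (∑ t ∈ Finset.univ.filter fun t : V → Bool => t v₀ = s u, ∏ v, W u v (t v))
      = ∑ t : V → Bool, (∏ v, W u v (t v)) * (if t v₀ = s u then (1:ℝ) else 0) := by
        rw [Finset.sum_filter]
        refine Finset.sum_congr rfl fun t _ => ?_
        by_cases h' : t v₀ = s u <;> simp [h']
    _ = ∑ c : Bool, W u v₀ c * (if c = s u then (1:ℝ) else 0) := hmarg
    _ = W u v₀ (s u) := by rw [Fintype.sum_bool]; cases hsu : s u <;> simp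

lemma expectation_term {U V : Type} [Fintype U] [Fintype V] [DecidableEq U] [DecidableEq V]
    (p : U → V → ℝ) (C : V → Finset (List U))
    (hnodup : ∀ v, ∀ l ∈ C v, l.Nodup)
    (x : V → List U → ℝ) (hx1 : ∀ v, ∑ l ∈ C v, x v l = 1)
    (v₀ : V) (F : Option U → ℝ) :
    ∑ ω : (∀ v : V, {l : List U // l ∈ C v}) × (U → V → Bool),
        ((∏ v, x v (ω.1 v).1) * ∏ u' : U, ∏ v : V, if ω.2 u' v then p u' v else 1 - p u' v) *
          F ((ω.1 v₀).1.find? fun u0 => ω.2 u0 v₀)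
      = ∑ l ∈ C v₀, x v₀ l * findExp (fun u => p u v₀) F l := by
  classical
  rw [Fintype.sum_prod_type]
  have step1 : ∀ σ : ∀ v : V, {l : List U // l ∈ C v},
      (∑ b : U → V → Bool,
        ((∏ v, x v (σ v).1) * ∏ u' : U, ∏ v : V, if b u' v then p u' v else 1 - p u' v) *
          F ((σ v₀).1.find? fun u0 => b u0 v₀))
        = (∏ v, x v (σ v).1) * findExp (fun u => p u v₀) F (σ v₀).1 := by
    intro σ
    have hedge := sum_edge_marginal (fun u v c => if c then p u v else 1 - p u v)
      (fun u v => by rw [Fintype.sum_bool]; norm_num) v₀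
      (fun s => F ((σ v₀).1.find? fun u0 => s u0))
    calc (∑ b : U → V → Bool,
          ((∏ v, x v (σ v).1) * ∏ u' : U, ∏ v : V, if b u' v then p u' v else 1 - p u' v) *
            F ((σ v₀).1.find? fun u0 => b u0 v₀))
        = (∏ v, x v (σ v).1) * ∑ b : U → V → Bool,
            (∏ u' : U, ∏ v : V, if b u' v then p u' v else 1 - p u' v) *
              F ((σ v₀).1.find? fun u0 => b u0 v₀) := by
          rw [Finset.mul_sum]
          exact Finset.sum_congr rfl fun b _ => by ring
      _ = (∏ v, x v (σ v).1) * findExp (fun u => p u v₀) F (σ v₀).1 := by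
          rw [hedge, sum_find _ _ _ (hnodup v₀ (σ v₀).1 (σ v₀).2)]
  rw [Finset.sum_congr rfl fun σ _ => step1 σ]
  have hsub : ∀ v : V, ∑ t : {l : List U // l ∈ C v}, x v t.1 = 1 := by
    intro v
    rw [← hx1 v]
    exact Finset.sum_coe_sort (C v) (x v)
  have hmarg := sum_pi_marginal (ι := V) (T := fun v => {l : List U // l ∈ C v})
      (fun v t => x v t.1) hsub v₀ (fun t => findExp (fun u => p u v₀) F t.1)
  rw [hmarg]
  exact Finset.sum_coe_sort (C v₀) (fun l => x v₀ l * findExp (fun u => p u v₀) F l)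

end Aux3

/-- `LPOPT(G) ≤ OPT_rel(G)`: given a feasible solution `x` of LP-config,
run VertexProbe independently on every online vertex `v`: sample a tuple `ω.1 v ∈ C_v`
with probability `x v (ω.1 v)` and, with mutually independent edge states
`ω.2 : U → V → Bool` (edge `(u,v)` active with probability `p u v`), return for `v` the
first active edge of its tuple (`ret ω v = (ω.1 v).find? (st · v)`).  The resulting
one-sided matching `N`: (i) contains at most one edge per online vertex; (ii) matches each
offline vertex `u` at most once in expectation; (iii) has expected weight exactly
`Σ_v Σ_{e ∈ C_v} val(e) · x_v(e)`. -/
theorem lp_config_realizable_by_relaxed_probing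
    (U V : Type) [Fintype U] [Fintype V] [DecidableEq U] [DecidableEq V]
    (p w : U → V → ℝ)
    (hp : ∀ u v, p u v ∈ Set.Icc (0 : ℝ) 1) (hw : ∀ u v, 0 ≤ w u v)
    (C : V → Finset (List U))
    (hnodup : ∀ v, ∀ l ∈ C v, l.Nodup)
    (hdcSub : ∀ v, ∀ l ∈ C v, ∀ l' : List U, l'.Sublist l → l' ∈ C v)
    (hdcPerm : ∀ v, ∀ l ∈ C v, ∀ l' : List U, l'.Perm l → l' ∈ C v)
    (x : V → List U → ℝ)
    (hxnn : ∀ v, ∀ l ∈ C v, 0 ≤ x v l)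
    (hx1 : ∀ v, ∑ l ∈ C v, x v l = 1)
    (hmatch : ∀ u : U,
      ∑ v, ∑ l ∈ (C v).filter (fun l => u ∈ l),
        p u v * ((l.takeWhile fun u' => u' ≠ u).map fun u' => 1 - p u' v).prod * x v l
      ≤ 1) :
    -- (i) each online vertex is incident to at most one returned edge
    (∀ ω : (∀ v : V, {l : List U // l ∈ C v}) × (U → V → Bool), ∀ v : V, ∀ u u' : U,
        ((ω.1 v).1.find? fun u0 => ω.2 u0 v) = some u →
        ((ω.1 v).1.find? fun u0 => ω.2 u0 v) = some u' → u = u') ∧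
    -- (ii) each offline vertex is matched at most once in expectation
    (∀ u : U,
      ∑ ω : (∀ v : V, {l : List U // l ∈ C v}) × (U → V → Bool),
        ((∏ v, x v (ω.1 v).1) * ∏ u' : U, ∏ v : V, if ω.2 u' v then p u' v else 1 - p u' v) *
          ((Finset.univ.filter fun v : V =>
            ((ω.1 v).1.find? fun u0 => ω.2 u0 v) = some u).card : ℝ)
      ≤ 1) ∧
    -- (iii) the expected weight equals the LP-config objective value
    (∑ ω : (∀ v : V, {l : List U // l ∈ C v}) × (U → V → Bool),
        ((∏ v, x v (ω.1 v).1) * ∏ u' : U, ∏ v : V, if ω.2 u' v then p u' v else 1 - p u' v) *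
          ∑ v : V, (((ω.1 v).1.find? fun u0 => ω.2 u0 v).elim 0 fun u => w u v)
      = ∑ v : V, ∑ l ∈ C v, tupleVal (fun u => p u v) (fun u => w u v) l * x v l) := by
  classical
  refine ⟨?_, ?_, ?_⟩
  · intro ω v u u' h1 h2
    rw [h1] at h2
    exact Option.some.inj h2
  · intro u
    have hcard : ∀ ω : (∀ v : V, {l : List U // l ∈ C v}) × (U → V → Bool),
        ((Finset.univ.filter fun v : V =>
            ((ω.1 v).1.find? fun u0 => ω.2 u0 v) = some u).card : ℝ)
          = ∑ v : V, (if ((ω.1 v).1.find? fun u0 => ω.2 u0 v) = some u then (1:ℝ) else 0) := by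
      intro ω
      rw [Finset.card_filter]
      push_cast
      rfl
    calc (∑ ω : (∀ v : V, {l : List U // l ∈ C v}) × (U → V → Bool),
          ((∏ v, x v (ω.1 v).1) * ∏ u' : U, ∏ v : V, if ω.2 u' v then p u' v else 1 - p u' v) *
            ((Finset.univ.filter fun v : V =>
              ((ω.1 v).1.find? fun u0 => ω.2 u0 v) = some u).card : ℝ))
        = ∑ v : V, ∑ ω : (∀ v : V, {l : List U // l ∈ C v}) × (U → V → Bool),
            ((∏ v, x v (ω.1 v).1) * ∏ u' : U, ∏ v : V, if ω.2 u' v then p u' v else 1 - p u' v) *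
              (if ((ω.1 v).1.find? fun u0 => ω.2 u0 v) = some u then (1:ℝ) else 0) := by
          rw [Finset.sum_congr rfl fun ω _ => by rw [hcard ω, Finset.mul_sum]]
          exact Finset.sum_comm
      _ = ∑ v, ∑ l ∈ (C v).filter (fun l => u ∈ l),
            p u v * ((l.takeWhile fun u' => u' ≠ u).map fun u' => 1 - p u' v).prod * x v l := by
          refine Finset.sum_congr rfl fun v _ => ?_
          have he := expectation_term p C hnodup x hx1 v
            (fun o => if o = some u then (1:ℝ) else 0)
          rw [he]
          rw [Finset.sum_congr rfl fun l hl => by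
            rw [findExp_indicator (fun u0 => p u0 v) u l (hnodup v l hl)]]
          rw [Finset.sum_filter]
          refine Finset.sum_congr rfl fun l _ => ?_
          by_cases hul : u ∈ l
          · simp only [if_pos hul]
            ring
          · simp only [if_neg hul, mul_zero]
      _ ≤ 1 := hmatch u
  · calc (∑ ω : (∀ v : V, {l : List U // l ∈ C v}) × (U → V → Bool),
          ((∏ v, x v (ω.1 v).1) * ∏ u' : U, ∏ v : V, if ω.2 u' v then p u' v else 1 - p u' v) *
            ∑ v : V, (((ω.1 v).1.find? fun u0 => ω.2 u0 v).elim 0 fun u => w u v))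
        = ∑ v : V, ∑ ω : (∀ v : V, {l : List U // l ∈ C v}) × (U → V → Bool),
            ((∏ v, x v (ω.1 v).1) * ∏ u' : U, ∏ v : V, if ω.2 u' v then p u' v else 1 - p u' v) *
              (((ω.1 v).1.find? fun u0 => ω.2 u0 v).elim 0 fun u => w u v) := by
          rw [Finset.sum_congr rfl fun ω _ => Finset.mul_sum _ _ _]
          exact Finset.sum_comm
      _ = ∑ v : V, ∑ l ∈ C v, tupleVal (fun u => p u v) (fun u => w u v) l * x v l := by
          refine Finset.sum_congr rfl fun v _ => ?_
          have he := expectation_term p C hnodup x hx1 v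
            (fun o => o.elim 0 fun u => w u v)
          rw [he]
          refine Finset.sum_congr rfl fun l hl => ?_
          rw [findExp_elim (fun u0 => p u0 v) (fun u0 => w u0 v) l]
          ring
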